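/- The dataset with x₁ = x₂ = x₃ > 0, p₁ = 4, p₂ = 3, p₃ = 1 is FOCs-rationalizable by the sophisticated quasi-hyperbolic model: there exist a monotone increasing, C², strictly concave u : ℝ₊ → ℝ, λ > 0, β ∈ (0,1), δ ∈ (0,1], μ₁, μ₂ ∈ (0,1), μ₃ = 1 such that u'(x_t) = λ (p_t/δ^t) ∏_{i=1}^t 1/(1−(1−β)μ_i) for t = 1,2,3. -/

import Mathlib

theorem focs_rationalizable_constant_data (x : ℝ) (hx : 0 < x) :
    ∃ (u : ℝ → ℝ) (lam β δ μ₁ μ₂ μ₃ : ℝ),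
      StrictMonoOn u (Set.Ici 0) ∧
      ContDiff ℝ 2 u ∧
      StrictConcaveOn ℝ (Set.Ici 0) u ∧
      0 < lam ∧ β ∈ Set.Ioo (0:ℝ) 1 ∧ δ ∈ Set.Ioc (0:ℝ) 1 ∧
      μ₁ ∈ Set.Ioo (0:ℝ) 1 ∧ μ₂ ∈ Set.Ioo (0:ℝ) 1 ∧ μ₃ = 1 ∧
      deriv u x = lam * (4 / δ ^ 1) * (1 / (1 - (1 - β) * μ₁)) ∧
      deriv u x = lam * (3 / δ ^ 2) *
        ((1 / (1 - (1 - β) * μ₁)) * (1 / (1 - (1 - β) * μ₂))) ∧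
      deriv u x = lam * (1 / δ ^ 3) *
        ((1 / (1 - (1 - β) * μ₁)) * (1 / (1 - (1 - β) * μ₂)) *
          (1 / (1 - (1 - β) * μ₃))) := by
  refine ⟨fun y => -Real.exp (-y), Real.exp (-x) / 6, 1/3, 1, 1/2, 3/8, 1,
    ?_, ?_, ?_, by positivity, by norm_num, by norm_num, by norm_num, by norm_num, rfl,
    ?_, ?_, ?_⟩
  · intro a _ b _ hab
    simp only [neg_lt_neg_iff]
    exact Real.exp_lt_exp.mpr (by linarith)
  · exact (Real.contDiff_exp.comp contDiff_neg).neg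
  · refine ⟨convex_Ici 0, fun a _ b _ hab p q hp hq hpq => ?_⟩
    have h := strictConvexOn_exp.2 (Set.mem_univ (-a)) (Set.mem_univ (-b))
      (by simpa using hab) hp hq hpq
    simp only [smul_eq_mul] at h ⊢
    rw [show -(p * a + q * b) = p * (-a) + q * (-b) by ring]
    linarith
  all_goals {
    have h1 : HasDerivAt (fun y => -Real.exp (-y)) (Real.exp (-x)) x := by
      have := (Real.hasDerivAt_exp (-x)).comp x (hasDerivAt_neg x)
      exact this.neg.congr_deriv (by ring)
    rw [h1.deriv]; norm_num; try ring }
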